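/- arXiv:1305.4225 — 2 statements merged into one kernel-verified Lean document; each statement's English description precedes it below -/
import Mathlib

section
/- Let (M, 𝓜, μ) be a σ-finite separable measure space with 0 < μ(M) ≤ ∞. Let A(·,·): M × M → ℂ be μ⊗μ-measurable and suppose that for every f ∈ L²(M; dμ), the function A(x,·)f(·) is absolutely integrable over M for μ-a.e. x ∈ M and that the function x ↦ ∫_M A(x,y) f(y) dμ(y) belongs to L²(M; dμ), so that (Af)(x) := ∫_M A(x,y) f(y) dμ(y) defines a linear operator A on L²(M; dμ); assume in addition that A is bounded on L²(M; dμ). Then A is positivity preserving if and only if A(x,y) ≥ 0 (i.e., A(x,y) is real and nonnegative) for μ⊗μ-a.e. (x,y) ∈ M × M. -/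
open MeasureTheory
open scoped ComplexOrder ENNReal

section Aux

variable {M : Type*} [MeasurableSpace M] {μ : Measure M}

/-- Absolute continuity of the integral. -/
lemma abscont {g : M → ℂ} (hg : Integrable g μ) {ε : ℝ} (hε : 0 < ε) :
    ∃ δ : ℝ, 0 < δ ∧ ∀ s, MeasurableSet s → μ s ≤ ENNReal.ofReal δ →
      ∫ y in s, ‖g y‖ ∂μ ≤ ε := by
  obtain ⟨δ, hδ, h⟩ := (memLp_one_iff_integrable.2 hg).eLpNorm_indicator_le le_rfl (by simp) hε
  refine ⟨δ, hδ, fun s hs hμs => ?_⟩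
  have h2 := h s hs hμs
  rw [eLpNorm_indicator_eq_eLpNorm_restrict hs, eLpNorm_one_eq_lintegral_enorm] at h2
  have h3 : ∫ y in s, ‖g y‖ ∂μ = (∫⁻ y in s, ‖g y‖ₑ ∂μ).toReal := by
    exact integral_norm_eq_lintegral_enorm (hg.aestronglyMeasurable.restrict)
  rw [h3]
  exact ENNReal.toReal_le_of_le_ofReal hε.le h2

lemma integral_nonneg_complex {h : M → ℂ}
    (hin : Integrable h μ) (hnn : ∀ᵐ y ∂μ, 0 ≤ h y) : 0 ≤ ∫ y, h y ∂μ := by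
  rw [Complex.nonneg_iff]
  constructor
  · have : (∫ y, h y ∂μ).re = ∫ y, (h y).re ∂μ := by
      rw [← RCLike.re_to_complex, ← integral_re hin]; simp
    rw [this]
    refine integral_nonneg_of_ae ?_
    filter_upwards [hnn] with y hy
    exact (Complex.nonneg_iff.1 hy).1
  · have : (∫ y, h y ∂μ).im = ∫ y, (h y).im ∂μ := by
      rw [← RCLike.im_to_complex, ← integral_im hin]; simp
    rw [this]
    refine (integral_eq_zero_of_ae ?_).symm
    filter_upwards [hnn] with y hy
    exact ((Complex.nonneg_iff.1 hy).2).symm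

/-- Key step: if integrals over an approximating family are nonnegative, the function is
a.e. nonnegative. -/
lemma key [IsFiniteMeasure μ] {g : M → ℂ} (hg : Integrable g μ)
    (h : ∀ E : Set M, MeasurableSet E → ∀ ε : ℝ, 0 < ε →
      ∃ T, MeasurableSet T ∧ μ (symmDiff E T) < ENNReal.ofReal ε ∧ 0 ≤ ∫ y in T, g y ∂μ) :
    ∀ᵐ y ∂μ, 0 ≤ g y := by
  have main : ∀ E : Set M, MeasurableSet E → 0 ≤ ∫ y in E, g y ∂μ := by
    intro E hE
    have claim : ∀ ε : ℝ, 0 < ε → ∃ z : ℂ, 0 ≤ z ∧ ‖(∫ y in E, g y ∂μ) - z‖ ≤ ε := by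
      intro ε hε
      obtain ⟨δ, hδ, hδ2⟩ := abscont hg (half_pos hε)
      obtain ⟨T, hT, hμsd, hTnn⟩ := h E hE δ hδ
      refine ⟨∫ y in T, g y ∂μ, hTnn, ?_⟩
      have hInt : ∀ s : Set M, IntegrableOn g s μ := fun s => hg.integrableOn
      have hE1 : ∫ y in E, g y ∂μ = ∫ y in E ∩ T, g y ∂μ + ∫ y in E \ T, g y ∂μ := by
        rw [← setIntegral_union (disjoint_sdiff_self_right.mono_left Set.inter_subset_right)
          (hE.diff hT) (hInt _) (hInt _), Set.inter_union_diff]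
      have hT1 : ∫ y in T, g y ∂μ = ∫ y in E ∩ T, g y ∂μ + ∫ y in T \ E, g y ∂μ := by
        rw [← setIntegral_union (disjoint_sdiff_self_right.mono_left Set.inter_subset_left)
          (hT.diff hE) (hInt _) (hInt _), Set.inter_comm E T, Set.inter_union_diff]
      have hsub1 : E \ T ⊆ symmDiff E T := Set.subset_union_left
      have hsub2 : T \ E ⊆ symmDiff E T := Set.subset_union_right
      have hb1 : ∫ y in E \ T, ‖g y‖ ∂μ ≤ ε / 2 :=
        hδ2 _ (hE.diff hT) ((measure_mono hsub1).trans hμsd.le)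
      have hb2 : ∫ y in T \ E, ‖g y‖ ∂μ ≤ ε / 2 :=
        hδ2 _ (hT.diff hE) ((measure_mono hsub2).trans hμsd.le)
      calc ‖(∫ y in E, g y ∂μ) - ∫ y in T, g y ∂μ‖
          = ‖(∫ y in E \ T, g y ∂μ) - ∫ y in T \ E, g y ∂μ‖ := by
            rw [hE1, hT1]; ring_nf
        _ ≤ ‖∫ y in E \ T, g y ∂μ‖ + ‖∫ y in T \ E, g y ∂μ‖ := norm_sub_le _ _
        _ ≤ (∫ y in E \ T, ‖g y‖ ∂μ) + ∫ y in T \ E, ‖g y‖ ∂μ :=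
            add_le_add (norm_integral_le_integral_norm _) (norm_integral_le_integral_norm _)
        _ ≤ ε / 2 + ε / 2 := add_le_add hb1 hb2
        _ = ε := by ring
    rw [Complex.nonneg_iff]
    constructor
    · by_contra hlt
      push_neg at hlt
      obtain ⟨z, hz, hnorm⟩ := claim (-(∫ y in E, g y ∂μ).re / 2) (by linarith)
      have h1 : |((∫ y in E, g y ∂μ) - z).re| ≤ ‖(∫ y in E, g y ∂μ) - z‖ :=
        Complex.abs_re_le_norm _
      have h2 : 0 ≤ z.re := (Complex.nonneg_iff.1 hz).1
      rw [Complex.sub_re, abs_le] at h1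
      have := h1.1
      linarith [hnorm, this]
    · by_contra hne
      have hne' : (∫ y in E, g y ∂μ).im ≠ 0 := fun h => hne h.symm
      obtain ⟨z, hz, hnorm⟩ := claim (|(∫ y in E, g y ∂μ).im| / 2)
        (by positivity)
      have h1 : |((∫ y in E, g y ∂μ) - z).im| ≤ ‖(∫ y in E, g y ∂μ) - z‖ :=
        Complex.abs_im_le_norm _
      have h2 : z.im = 0 := ((Complex.nonneg_iff.1 hz).2).symm
      rw [Complex.sub_im, h2, sub_zero] at h1
      have := h1.trans hnorm
      have habs : 0 < |(∫ y in E, g y ∂μ).im| := abs_pos.2 hne'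
      linarith
  -- now transfer to a.e. nonnegativity
  have hre : 0 ≤ᵐ[μ] fun y => (g y).re := by
    refine ae_nonneg_of_forall_setIntegral_nonneg (by simpa using hg.re) (fun s hs _ => ?_)
    have : ∫ y in s, (g y).re ∂μ = (∫ y in s, g y ∂μ).re := by
      rw [← RCLike.re_to_complex, ← integral_re hg.integrableOn]; simp
    rw [this]
    exact (Complex.nonneg_iff.1 (main s hs)).1
  have him0 : ∀ s, MeasurableSet s → (∫ y in s, (g y).im ∂μ) = 0 := by
    intro s hs
    have : ∫ y in s, (g y).im ∂μ = (∫ y in s, g y ∂μ).im := by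
      rw [← RCLike.im_to_complex, ← integral_im hg.integrableOn]; simp
    rw [this]
    exact ((Complex.nonneg_iff.1 (main s hs)).2).symm
  have him1 : 0 ≤ᵐ[μ] fun y => (g y).im := by
    refine ae_nonneg_of_forall_setIntegral_nonneg (by simpa using hg.im) (fun s hs _ => ?_)
    rw [him0 s hs]
  have him2 : 0 ≤ᵐ[μ] fun y => -(g y).im := by
    refine ae_nonneg_of_forall_setIntegral_nonneg
      ((show Integrable (fun y => (g y).im) μ by simpa using hg.im).neg) (fun s hs _ => ?_)
    rw [integral_neg, him0 s hs, neg_zero]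
  filter_upwards [hre, him1, him2] with y h1 h2 h3
  rw [Complex.nonneg_iff]
  exact ⟨h1, (le_antisymm (by simpa using h3) h2).symm⟩

lemma ae_of_ae_restrict_spanning [SigmaFinite μ] {Q : M → Prop}
    (h : ∀ n, ∀ᵐ y ∂μ.restrict (spanningSets μ n), Q y) : ∀ᵐ y ∂μ, Q y := by
  rw [ae_iff]
  have hsub : {y | ¬ Q y} ⊆ ⋃ n, {y | ¬ Q y} ∩ spanningSets μ n := by
    intro y hy
    have : y ∈ ⋃ n, spanningSets μ n := by
      rw [iUnion_spanningSets]; trivial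
    obtain ⟨n, hn⟩ := Set.mem_iUnion.1 this
    exact Set.mem_iUnion.2 ⟨n, hy, hn⟩
  refine measure_mono_null hsub (measure_iUnion_null fun n => ?_)
  have := h n
  rw [ae_iff, Measure.restrict_apply' (measurableSet_spanningSets μ n)] at this
  exact this

end Aux

/-- Let `A` be a bounded integral operator on `L²(M; dμ)` with `μ ⊗ μ`-measurable integral
kernel `k`.  Then `A` is positivity preserving if and only if `k ≥ 0` holds
`μ ⊗ μ`-a.e. on `M × M`. -/
theorem integral_operator_positivity_preserving_iff_kernel_nonneg
    {M : Type*} [MeasurableSpace M] (μ : Measure M) [SigmaFinite μ]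
    [MeasureTheory.IsSeparable μ] (hμ : μ ≠ 0)
    (k : M × M → ℂ) (hk : AEMeasurable k (μ.prod μ))
    (A : Lp ℂ 2 μ →L[ℂ] Lp ℂ 2 μ)
    (hint : ∀ f : Lp ℂ 2 μ, ∀ᵐ x ∂μ, Integrable (fun y => k (x, y) * f y) μ)
    (hA : ∀ f : Lp ℂ 2 μ, (A f : M → ℂ) =ᵐ[μ] fun x => ∫ y, k (x, y) * f y ∂μ) :
    (∀ f : Lp ℂ 2 μ, f ≠ 0 → (∀ᵐ x ∂μ, 0 ≤ f x) → (∀ᵐ x ∂μ, 0 ≤ A f x)) ↔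
      (∀ᵐ p ∂(μ.prod μ), 0 ≤ k p) := by
  constructor
  · intro hpos
    obtain ⟨𝒜, h𝒜c, h𝒜d⟩ := exists_countable_measureDense (μ := μ)
    set S : ℕ → Set M := spanningSets μ with hS
    set D : Set (Set M) := ⋃ n, insert (S n) ((fun T => T ∩ S n) '' 𝒜) with hD
    have hDc : D.Countable := Set.countable_iUnion fun n => ((h𝒜c.image _).insert _)
    have hDmeas : ∀ T ∈ D, MeasurableSet T := by
      intro T hT
      simp only [hD, Set.mem_iUnion, Set.mem_insert_iff, Set.mem_image] at hT
      obtain ⟨n, rfl | ⟨U, hU, rfl⟩⟩ := hT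
      · exact measurableSet_spanningSets μ n
      · exact (h𝒜d.measurable U hU).inter (measurableSet_spanningSets μ n)
    have hDfin : ∀ T ∈ D, μ T < ∞ := by
      intro T hT
      simp only [hD, Set.mem_iUnion, Set.mem_insert_iff, Set.mem_image] at hT
      obtain ⟨n, rfl | ⟨U, hU, rfl⟩⟩ := hT
      · exact measure_spanningSets_lt_top μ n
      · exact (measure_mono Set.inter_subset_right).trans_lt (measure_spanningSets_lt_top μ n)
    -- The basic a.e. statement for each set in `D`.
    have hTstep : ∀ T ∈ D, ∀ᵐ x ∂μ,
        IntegrableOn (fun y => k (x, y)) T μ ∧ 0 ≤ ∫ y in T, k (x, y) ∂μ := by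
      intro T hTD
      have mT := hDmeas T hTD
      have fT := (hDfin T hTD).ne
      set f : Lp ℂ 2 μ := indicatorConstLp 2 mT fT (1 : ℂ) with hf
      have hcoe : ⇑f =ᵐ[μ] T.indicator fun _ => (1 : ℂ) := indicatorConstLp_coeFn
      have hIpart : ∀ᵐ x ∂μ, IntegrableOn (fun y => k (x, y)) T μ := by
        filter_upwards [hint f] with x hx
        have h1 : Integrable (T.indicator fun y => k (x, y)) μ := by
          refine hx.congr ?_
          filter_upwards [hcoe] with y hy
          rw [hy]
          by_cases hyT : y ∈ T <;> simp [hyT]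
        exact (integrable_indicator_iff mT).1 h1
      by_cases hμT : μ T = 0
      · have hres : μ.restrict T = 0 := Measure.restrict_eq_zero.2 hμT
        filter_upwards [hIpart] with x hx
        exact ⟨hx, by simp [hres]⟩
      · have hf0 : f ≠ 0 := by
          intro h0
          have hnorm := norm_indicatorConstLp (μ := μ) (hs := mT) (hμs := fT)
            (c := (1 : ℂ)) (by norm_num : (2 : ℝ≥0∞) ≠ 0) (by norm_num : (2 : ℝ≥0∞) ≠ ∞)
          rw [← hf, h0, norm_zero] at hnorm
          have hpos' : 0 < (μ T).toReal := ENNReal.toReal_pos hμT fT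
          have hlt : (0 : ℝ) < ‖(1 : ℂ)‖ * (μ T).toReal ^ (1 / (2 : ℝ≥0∞).toReal) := by
            rw [norm_one, one_mul]
            exact Real.rpow_pos_of_pos hpos' _
          rw [← measureReal_def, ← hnorm] at hlt
          exact lt_irrefl _ hlt
        have hfnn : ∀ᵐ x ∂μ, 0 ≤ f x := by
          filter_upwards [hcoe] with y hy
          rw [hy]
          by_cases hyT : y ∈ T
          · simpa [hyT] using (zero_le_one : (0 : ℂ) ≤ 1)
          · simp [hyT]
        have hApos := hpos f hf0 hfnn
        filter_upwards [hIpart, hApos, hA f] with x hInt hP hAx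
        refine ⟨hInt, ?_⟩
        have heq : (A f : M → ℂ) x = ∫ y in T, k (x, y) ∂μ := by
          rw [hAx]
          have h2 : ∫ y, k (x, y) * f y ∂μ = ∫ y, T.indicator (fun y => k (x, y)) y ∂μ := by
            refine integral_congr_ae ?_
            filter_upwards [hcoe] with y hy
            rw [hy]
            by_cases hyT : y ∈ T <;> simp [hyT]
          rw [h2, integral_indicator mT]
        rwa [heq] at hP
    have hTall : ∀ᵐ x ∂μ, ∀ T ∈ D,
        IntegrableOn (fun y => k (x, y)) T μ ∧ 0 ≤ ∫ y in T, k (x, y) ∂μ :=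
      (ae_ball_iff hDc).2 hTstep
    have main : ∀ᵐ x ∂μ, ∀ᵐ y ∂μ, 0 ≤ k (x, y) := by
      filter_upwards [hTall] with x hx
      apply ae_of_ae_restrict_spanning
      intro n
      haveI : IsFiniteMeasure (μ.restrict (S n)) :=
        ⟨by rw [Measure.restrict_apply_univ]; exact measure_spanningSets_lt_top μ n⟩
      have hSnD : S n ∈ D := Set.mem_iUnion.2 ⟨n, Set.mem_insert _ _⟩
      have hgint : Integrable (fun y => k (x, y)) (μ.restrict (S n)) := (hx _ hSnD).1
      apply key hgint
      intro E hE ε hε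
      have hEfin : μ (E ∩ S n) ≠ ∞ :=
        ((measure_mono Set.inter_subset_right).trans_lt (measure_spanningSets_lt_top μ n)).ne
      obtain ⟨U, hU𝒜, hUd⟩ := h𝒜d.approx (E ∩ S n)
        (hE.inter (measurableSet_spanningSets μ n)) hEfin ε hε
      have hUmeas : MeasurableSet (U ∩ S n) :=
        (h𝒜d.measurable U hU𝒜).inter (measurableSet_spanningSets μ n)
      refine ⟨U ∩ S n, hUmeas, ?_, ?_⟩
      · rw [Measure.restrict_apply' (measurableSet_spanningSets μ n)]
        refine lt_of_le_of_lt (measure_mono ?_) hUd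
        intro z hz
        simp only [Set.mem_inter_iff, Set.mem_symmDiff, Set.mem_inter_iff] at *
        tauto
      · have hmem : (U ∩ S n) ∈ D := Set.mem_iUnion.2 ⟨n, Or.inr ⟨U, hU𝒜, rfl⟩⟩
        have h0 := (hx _ hmem).2
        rw [Measure.restrict_restrict hUmeas, Set.inter_assoc, Set.inter_self]
        exact h0
    -- pass to the product measure via the measurable version `k'` of `k`.
    have k'meas : Measurable (hk.mk k) := hk.measurable_mk
    have main' : ∀ᵐ x ∂μ, ∀ᵐ y ∂μ, 0 ≤ hk.mk k (x, y) := by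
      filter_upwards [main, Measure.ae_ae_of_ae_prod hk.ae_eq_mk] with x h1 h2
      filter_upwards [h1, h2] with y hy1 hy2
      exact hy2 ▸ hy1
    have hsmeas : MeasurableSet {p : M × M | 0 ≤ hk.mk k p} := by
      have hset : {p : M × M | 0 ≤ hk.mk k p} =
          hk.mk k ⁻¹' (Complex.re ⁻¹' Set.Ici 0 ∩ Complex.im ⁻¹' {0}) := by
        ext p
        simp [Complex.nonneg_iff, eq_comm]
      rw [hset]
      exact k'meas ((Complex.measurable_re measurableSet_Ici).inter
        (Complex.measurable_im (measurableSet_singleton 0)))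
    have hprod : ∀ᵐ p ∂(μ.prod μ), 0 ≤ hk.mk k p :=
      (Measure.ae_prod_iff_ae_ae hsmeas).2 main'
    filter_upwards [hprod, hk.ae_eq_mk] with p h1 h2
    rw [h2]
    exact h1
  · intro hknn f _ hfnn
    filter_upwards [hA f, hint f, Measure.ae_ae_of_ae_prod hknn] with x hAx hIx hkx
    rw [hAx]
    refine integral_nonneg_complex hIx ?_
    filter_upwards [hfnn, hkx] with y h1 h2
    exact mul_nonneg h2 h1
end

section
/- Let c > 0 and μ > 0 be real constants. Then there exists a finite constant C ≥ 0 such that for every r > 0: ∫₀^∞ t^{-1}·(1+t)·exp(−μ t)·exp(−c r²/t) dt ≤ C·ln(1 + r^{-1}). -/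
open MeasureTheory Set Real

lemma exp_neg_le_inv {x : ℝ} (hx : 0 < x) : Real.exp (-x) ≤ x⁻¹ := by
  rw [Real.exp_neg]
  have hx' : x ≤ Real.exp x := by linarith [Real.add_one_le_exp x]
  exact inv_anti₀ hx hx'

set_option maxHeartbeats 1000000 in
/-- For `c > 0`, `μ > 0`, there is a finite constant `C ≥ 0` such that
`∫₀^∞ t^{-1} (1+t) e^{-μ t} e^{-c r²/t} dt ≤ C ln(1 + r⁻¹)` for every `r > 0`.  This
converts the two-dimensional Gaussian heat kernel bound into the logarithmic Green's
function bound. -/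
theorem greens_function_bound_dim_two (c μ : ℝ) (hc : 0 < c) (hμ : 0 < μ) :
    ∃ C : ℝ, 0 ≤ C ∧ ∀ r : ℝ, 0 < r →
      (∫ t in Set.Ioi (0 : ℝ),
          t⁻¹ * (1 + t) * Real.exp (-μ * t) * Real.exp (-c * r ^ 2 / t)) ≤
        C * Real.log (1 + r⁻¹) := by
  -- the global majorant `(1+t) e^{-μ t}` is integrable on `(0, ∞)`
  have hg : IntegrableOn (fun t : ℝ => (1 + t) * Real.exp (-μ * t)) (Ioi 0) := by
    have h1 : IntegrableOn (fun t : ℝ => Real.exp (-μ * t)) (Ioi 0) :=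
      exp_neg_integrableOn_Ioi 0 hμ
    have h2 : IntegrableOn (fun t : ℝ => t ^ (1 : ℝ) * Real.exp (-μ * t ^ (1 : ℝ))) (Ioi 0) :=
      integrableOn_rpow_mul_exp_neg_mul_rpow (by norm_num) one_pos hμ
    simp only [Real.rpow_one] at h2
    have h3 : IntegrableOn (fun t : ℝ => Real.exp (-μ * t) + t * Real.exp (-μ * t)) (Ioi 0) :=
      h1.add h2
    exact h3.congr_fun (fun t _ => by ring) measurableSet_Ioi
  set m : ℝ := ∫ t in Ioi (0 : ℝ), (1 + t) * Real.exp (-μ * t) with hm_def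
  have hm : 0 ≤ m := by
    apply setIntegral_nonneg measurableSet_Ioi
    intro t ht
    have : (0:ℝ) < t := ht
    positivity
  set m₃ : ℝ := ∫ t in Ioi (1 : ℝ), 2 * Real.exp (-μ * t) with hm3_def
  have hm3 : 0 ≤ m₃ := by
    apply setIntegral_nonneg measurableSet_Ioi
    intro t _; positivity
  have hlog2 : (0:ℝ) < Real.log 2 := Real.log_pos (by norm_num)
  set C : ℝ := max ((2 / c + m₃) / Real.log 2 + 4) (2 * m / c) with hC_def
  have hC : 0 ≤ C := by
    refine le_max_of_le_left ?_
    have : 0 ≤ (2 / c + m₃) / Real.log 2 := by positivity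
    linarith
  refine ⟨C, hC, ?_⟩
  intro r hr
  set L : ℝ := Real.log (1 + r⁻¹) with hL_def
  have hrinv : 0 < r⁻¹ := inv_pos.mpr hr
  have hL : 0 < L := Real.log_pos (by linarith)
  set f : ℝ → ℝ := fun t => t⁻¹ * (1 + t) * Real.exp (-μ * t) * Real.exp (-c * r ^ 2 / t)
    with hf_def
  by_cases hi : IntegrableOn f (Ioi 0)
  swap
  · rw [MeasureTheory.integral_undef hi]
    positivity
  have hr2 : (0:ℝ) < r ^ 2 := by positivity
  have hcr2 : (0:ℝ) < c * r ^ 2 := by positivity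
  -- key pointwise fact: `exp (-c r² / t) ≤ t / (c r²)` for `t > 0`
  have hkey : ∀ t : ℝ, 0 < t → Real.exp (-c * r ^ 2 / t) ≤ t * (c * r ^ 2)⁻¹ := by
    intro t ht
    have h1 : (0:ℝ) < c * r ^ 2 / t := by positivity
    have h2 : Real.exp (-(c * r ^ 2 / t)) ≤ (c * r ^ 2 / t)⁻¹ := exp_neg_le_inv h1
    have h3 : -c * r ^ 2 / t = -(c * r ^ 2 / t) := by ring
    rw [h3]
    calc Real.exp (-(c * r ^ 2 / t)) ≤ (c * r ^ 2 / t)⁻¹ := h2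
      _ = t * (c * r ^ 2)⁻¹ := by field_simp
  rcases le_or_gt r 1 with hr1 | hr1
  · -- case r ≤ 1
    have hr21 : r ^ 2 ≤ 1 := by nlinarith
    -- split the integral
    have hsets : Ioi (0:ℝ) = (Ioc 0 (r ^ 2) ∪ Ioc (r ^ 2) 1) ∪ Ioi 1 := by
      rw [Ioc_union_Ioc_eq_Ioc hr2.le hr21, Ioc_union_Ioi_eq_Ioi zero_le_one]
    have hiA : IntegrableOn f (Ioc 0 (r ^ 2)) := hi.mono_set Ioc_subset_Ioi_self
    have hiB : IntegrableOn f (Ioc (r ^ 2) 1) :=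
      hi.mono_set (Ioc_subset_Ioi_self.trans (Ioi_subset_Ioi hr2.le))
    have hiC : IntegrableOn f (Ioi 1) := hi.mono_set (Ioi_subset_Ioi zero_le_one)
    have hsplit : (∫ t in Ioi (0:ℝ), f t) =
        (∫ t in Ioc (0:ℝ) (r ^ 2), f t) + (∫ t in Ioc (r ^ 2) (1:ℝ), f t)
          + (∫ t in Ioi (1:ℝ), f t) := by
      have hdisj : Disjoint (Ioc (0:ℝ) (r ^ 2) ∪ Ioc (r ^ 2) 1) (Ioi 1) :=
        Disjoint.union_left (Ioc_disjoint_Ioi hr21) (Ioc_disjoint_Ioi le_rfl)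
      rw [hsets, setIntegral_union hdisj measurableSet_Ioi
        (hiA.union hiB) hiC,
        setIntegral_union (Ioc_disjoint_Ioc_of_le le_rfl) measurableSet_Ioc hiA hiB]
    -- piece A : bound by the constant 2/(c r²)
    have hA : (∫ t in Ioc (0:ℝ) (r ^ 2), f t) ≤ 2 / c := by
      have hb : ∀ t ∈ Ioc (0:ℝ) (r ^ 2), f t ≤ 2 * (c * r ^ 2)⁻¹ := by
        intro t ht
        obtain ⟨ht0, htr⟩ := ht
        have h1 : Real.exp (-μ * t) ≤ 1 := by
          rw [Real.exp_le_one_iff]; nlinarith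
        have h2 := hkey t ht0
        have h3 : (0:ℝ) ≤ Real.exp (-c * r ^ 2 / t) := (Real.exp_pos _).le
        have h4 : (0:ℝ) ≤ Real.exp (-μ * t) := (Real.exp_pos _).le
        have ht1 : t ≤ 1 := htr.trans hr21
        calc f t = t⁻¹ * (1 + t) * Real.exp (-μ * t) * Real.exp (-c * r ^ 2 / t) := rfl
          _ ≤ t⁻¹ * (1 + t) * 1 * (t * (c * r ^ 2)⁻¹) := by
              apply mul_le_mul
              · apply mul_le_mul_of_nonneg_left h1
                positivity
              · exact h2
              · exact h3
              · positivity
          _ = (1 + t) * (c * r ^ 2)⁻¹ := by field_simp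
          _ ≤ 2 * (c * r ^ 2)⁻¹ := by
              apply mul_le_mul_of_nonneg_right (by linarith) (by positivity)
      calc (∫ t in Ioc (0:ℝ) (r ^ 2), f t)
          ≤ ∫ _ in Ioc (0:ℝ) (r ^ 2), 2 * (c * r ^ 2)⁻¹ :=
            setIntegral_mono_on hiA ((integrableOn_const_iff (by finiteness)).mpr (Or.inr measure_Ioc_lt_top))
              measurableSet_Ioc hb
        _ = (volume (Ioc (0:ℝ) (r ^ 2))).toReal * (2 * (c * r ^ 2)⁻¹) := by
            rw [setIntegral_const, smul_eq_mul]; rfl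
        _ = r ^ 2 * (2 * (c * r ^ 2)⁻¹) := by
            rw [Real.volume_Ioc]; rw [sub_zero, ENNReal.toReal_ofReal hr2.le]
        _ = 2 / c := by field_simp
    -- piece B : bound by 2/t, integral = -4 log r
    have hB : (∫ t in Ioc (r ^ 2) (1:ℝ), f t) ≤ -(4 * Real.log r) := by
      have hb : ∀ t ∈ Ioc (r ^ 2) (1:ℝ), f t ≤ 2 * t⁻¹ := by
        intro t ht
        obtain ⟨ht0, ht1⟩ := ht
        have ht0' : (0:ℝ) < t := hr2.trans ht0
        have h1 : Real.exp (-μ * t) ≤ 1 := by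
          rw [Real.exp_le_one_iff]; nlinarith
        have h2 : Real.exp (-c * r ^ 2 / t) ≤ 1 := by
          rw [Real.exp_le_one_iff]
          have : (0:ℝ) < c * r ^ 2 / t := by positivity
          have h3 : -c * r ^ 2 / t = -(c * r ^ 2 / t) := by ring
          rw [h3]; linarith
        have h3 : (0:ℝ) ≤ Real.exp (-μ * t) := (Real.exp_pos _).le
        calc f t = t⁻¹ * (1 + t) * Real.exp (-μ * t) * Real.exp (-c * r ^ 2 / t) := rfl
          _ ≤ t⁻¹ * (1 + t) * 1 * 1 := by
              apply mul_le_mul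
              · apply mul_le_mul_of_nonneg_left h1; positivity
              · exact h2
              · exact (Real.exp_pos _).le
              · positivity
          _ = t⁻¹ * (1 + t) := by ring
          _ ≤ t⁻¹ * 2 := by
              apply mul_le_mul_of_nonneg_left (by linarith) (by positivity)
          _ = 2 * t⁻¹ := by ring
      have hint : IntegrableOn (fun t : ℝ => 2 * t⁻¹) (Ioc (r ^ 2) 1) := by
        apply IntegrableOn.mono_set _ (Ioc_subset_Icc_self)
        apply ContinuousOn.integrableOn_Icc
        apply ContinuousOn.mul continuousOn_const
        apply ContinuousOn.inv₀ continuousOn_id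
        intro x hx
        exact ne_of_gt (lt_of_lt_of_le hr2 hx.1)
      have hval : (∫ t in Ioc (r ^ 2) (1:ℝ), 2 * t⁻¹) = -(4 * Real.log r) := by
        rw [← intervalIntegral.integral_of_le hr21]
        rw [intervalIntegral.integral_const_mul]
        rw [integral_inv_of_pos hr2 one_pos]
        rw [one_div, Real.log_inv, Real.log_pow]
        push_cast
        ring
      calc (∫ t in Ioc (r ^ 2) (1:ℝ), f t) ≤ ∫ t in Ioc (r ^ 2) (1:ℝ), 2 * t⁻¹ :=
            setIntegral_mono_on hiB hint measurableSet_Ioc hb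
        _ = -(4 * Real.log r) := hval
    -- piece C : bound by 2 e^{-μ t}
    have hCpiece : (∫ t in Ioi (1:ℝ), f t) ≤ m₃ := by
      have hb : ∀ t ∈ Ioi (1:ℝ), f t ≤ 2 * Real.exp (-μ * t) := by
        intro t ht
        have ht1 : (1:ℝ) < t := ht
        have ht0 : (0:ℝ) < t := by linarith
        have h2 : Real.exp (-c * r ^ 2 / t) ≤ 1 := by
          rw [Real.exp_le_one_iff]
          have : (0:ℝ) < c * r ^ 2 / t := by positivity
          have h3 : -c * r ^ 2 / t = -(c * r ^ 2 / t) := by ring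
          rw [h3]; linarith
        have h4 : t⁻¹ * (1 + t) ≤ 2 := by
          have h5 : t⁻¹ * (1 + t) ≤ t⁻¹ * (2 * t) :=
            mul_le_mul_of_nonneg_left (by linarith) (by positivity)
          have h6 : t⁻¹ * (2 * t) = 2 := by field_simp
          linarith
        calc f t = t⁻¹ * (1 + t) * Real.exp (-μ * t) * Real.exp (-c * r ^ 2 / t) := rfl
          _ ≤ t⁻¹ * (1 + t) * Real.exp (-μ * t) * 1 := by
              apply mul_le_mul_of_nonneg_left h2
              have : (0:ℝ) < t⁻¹ * (1 + t) := by positivity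
              positivity
          _ = t⁻¹ * (1 + t) * Real.exp (-μ * t) := by ring
          _ ≤ 2 * Real.exp (-μ * t) := by
              apply mul_le_mul_of_nonneg_right h4 (Real.exp_pos _).le
      have hint : IntegrableOn (fun t : ℝ => 2 * Real.exp (-μ * t)) (Ioi 1) :=
        (exp_neg_integrableOn_Ioi 1 hμ).const_mul 2
      exact setIntegral_mono_on hiC hint measurableSet_Ioi hb
    -- combine
    have hLlog2 : Real.log 2 ≤ L := by
      apply Real.log_le_log (by norm_num)
      have h4 : r * r⁻¹ = 1 := mul_inv_cancel₀ hr.ne'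
      have : (1:ℝ) ≤ r⁻¹ := by nlinarith
      linarith
    have hlogr : -Real.log r ≤ L := by
      rw [← Real.log_inv]
      apply Real.log_le_log hrinv
      linarith
    have h1 : (2 / c + m₃) ≤ ((2 / c + m₃) / Real.log 2) * L := by
      have hq : 0 ≤ (2 / c + m₃) / Real.log 2 := by positivity
      calc (2 / c + m₃) = ((2 / c + m₃) / Real.log 2) * Real.log 2 := by
            field_simp
        _ ≤ ((2 / c + m₃) / Real.log 2) * L := mul_le_mul_of_nonneg_left hLlog2 hq
    have h2 : -(4 * Real.log r) ≤ 4 * L := by linarith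
    have hfinal : (∫ t in Ioi (0:ℝ), f t) ≤ ((2 / c + m₃) / Real.log 2 + 4) * L := by
      rw [hsplit]
      nlinarith [hA, hB, hCpiece, h1, h2]
    calc (∫ t in Ioi (0:ℝ), f t) ≤ ((2 / c + m₃) / Real.log 2 + 4) * L := hfinal
      _ ≤ C * L := mul_le_mul_of_nonneg_right (le_max_left _ _) hL.le
  · -- case r > 1
    have hb : ∀ t ∈ Ioi (0:ℝ), f t ≤ (c * r ^ 2)⁻¹ * ((1 + t) * Real.exp (-μ * t)) := by
      intro t ht
      have ht0 : (0:ℝ) < t := ht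
      have h2 := hkey t ht0
      calc f t = t⁻¹ * (1 + t) * Real.exp (-μ * t) * Real.exp (-c * r ^ 2 / t) := rfl
        _ ≤ t⁻¹ * (1 + t) * Real.exp (-μ * t) * (t * (c * r ^ 2)⁻¹) := by
            apply mul_le_mul_of_nonneg_left h2
            have : (0:ℝ) < t⁻¹ * (1 + t) := by positivity
            positivity
        _ = (c * r ^ 2)⁻¹ * ((1 + t) * Real.exp (-μ * t)) := by
            field_simp
    have hint : IntegrableOn
        (fun t : ℝ => (c * r ^ 2)⁻¹ * ((1 + t) * Real.exp (-μ * t))) (Ioi 0) :=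
      hg.const_mul _
    have h1 : (∫ t in Ioi (0:ℝ), f t) ≤ (c * r ^ 2)⁻¹ * m := by
      calc (∫ t in Ioi (0:ℝ), f t)
          ≤ ∫ t in Ioi (0:ℝ), (c * r ^ 2)⁻¹ * ((1 + t) * Real.exp (-μ * t)) :=
            setIntegral_mono_on hi hint measurableSet_Ioi hb
        _ = (c * r ^ 2)⁻¹ * m := by rw [integral_const_mul]
    -- lower bound on the logarithm
    have hLr : (2 * r ^ 2)⁻¹ ≤ L := by
      have h2 : 1 - (1 + r⁻¹)⁻¹ ≤ L := Real.one_sub_inv_le_log_of_pos (by linarith)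
      have e1 : (1:ℝ) + r⁻¹ = (r + 1) / r := by
        field_simp
      have e2 : ((r + 1) / r)⁻¹ = r / (r + 1) := inv_div _ _
      rw [e1, e2] at h2
      have e3 : (1:ℝ) - r / (r + 1) = 1 / (r + 1) := by
        field_simp
        ring
      rw [e3] at h2
      have h3 : (2 * r ^ 2)⁻¹ ≤ 1 / (r + 1) := by
        rw [inv_eq_one_div, div_le_div_iff₀ (by positivity) (by positivity)]
        nlinarith
      linarith
    calc (∫ t in Ioi (0:ℝ), f t) ≤ (c * r ^ 2)⁻¹ * m := h1
      _ = (m * (2 * r ^ 2)⁻¹) * (2 / c) := by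
          field_simp
      _ ≤ (m * L) * (2 / c) := by
          apply mul_le_mul_of_nonneg_right _ (by positivity)
          exact mul_le_mul_of_nonneg_left hLr hm
      _ = (2 * m / c) * L := by ring
      _ ≤ C * L := mul_le_mul_of_nonneg_right (le_max_right _ _) hL.le
end
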